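/- Fix λ ∈ (0, λ₀). There exists a constant K₁(λ) ≥ 1, depending only on d, M₀, M₁, λ, with the following property. Let ω ∈ Ω and N ∈ ℕ be such that Σ_{m=−k+1}^{0} ξ_m(ω) > k(M₁ + λ + log(2d+1)) for all k ≥ N. Then for every c ≥ 1, every φ ∈ F(c), every y ∈ ℤ^d with |y| ≥ N, and every integer n ≥ N: (T^{−n,0}(ω)φ)(y) ≤ K₁(λ) · (e^{−λ|y|} + c·e^{−λn}) · (T^{−n,0}(ω)φ)(0). -/

import Mathlib

open MeasureTheory Filter

set_option maxHeartbeats 1000000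

namespace BKpaper

abbrev X (d : ℕ) := Fin d → ℤ

/-- the max-norm |x| = max_i |x_i|, as a natural number -/
def nm {d : ℕ} (x : X d) : ℕ := Finset.univ.sup fun i => (x i).natAbs

/-- spin value of a boolean: `true ↦ 1`, `false ↦ -1` -/
def sgn (b : Bool) : ℝ := if b then 1 else -1

/-- ξ_m(ω) = M₀ if ω_m = 1, ξ_m(ω) = −M₁ if ω_m = −1 -/
def xi (M₀ M₁ : ℝ) (ω : ℤ → Bool) (m : ℤ) : ℝ := if ω m then M₀ else -M₁

/-- one admissible step of the lazy random walk -/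
def stepOK {d : ℕ} (x y : X d) : Prop := (∑ i, (y i - x i).natAbs) ≤ 1

/-- admissible path on the (discrete) interval [n₁, n₂] -/
def Adm {d : ℕ} (n₁ n₂ : ℤ) (γ : ℤ → X d) : Prop :=
  ∀ n : ℤ, n₁ ≤ n → n < n₂ → stepOK (γ n) (γ (n + 1))

/-- a path frozen outside [n₁,n₂]; used to represent a path on [n₁,n₂] by a
function on all of ℤ -/
def Frozen {d : ℕ} (n₁ n₂ : ℤ) (γ : ℤ → X d) : Prop :=
  (∀ n : ℤ, n ≤ n₁ → γ n = γ n₁) ∧ (∀ n : ℤ, n₂ ≤ n → γ n = γ n₂)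

/-- Φ_{n₁,n₂}(γ,ω) = Σ_{n=n₁+1}^{n₂} V(γ(n)) ω_n -/
noncomputable def Phi {d : ℕ} (V : X d → ℝ) (ω : ℤ → Bool) (n₁ n₂ : ℤ) (γ : ℤ → X d) : ℝ :=
  ∑ n ∈ Finset.Icc (n₁ + 1) n₂, V (γ n) * sgn (ω n)

/-- the Feynman–Kac operator T^{n₁,n₂}(ω) -/
noncomputable def T {d : ℕ} (V : X d → ℝ) (ω : ℤ → Bool) (n₁ n₂ : ℤ)
    (u : X d → ℝ) (x : X d) : ℝ :=
  ((2 * (d : ℝ) + 1) ^ (n₂ - n₁))⁻¹ *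
    ∑' γ : {γ : ℤ → X d // Adm n₁ n₂ γ ∧ Frozen n₁ n₂ γ ∧ γ n₂ = x},
      Real.exp (Phi V ω n₁ n₂ γ.1) * u (γ.1 n₁)

/-- the partition function Z_{n₁,n₂}(x₁,x₂) -/
noncomputable def Z {d : ℕ} (V : X d → ℝ) (ω : ℤ → Bool) (n₁ n₂ : ℤ) (x₁ x₂ : X d) : ℝ :=
  ∑' γ : {γ : ℤ → X d // Adm n₁ n₂ γ ∧ Frozen n₁ n₂ γ ∧ γ n₁ = x₁ ∧ γ n₂ = x₂},
    Real.exp (Phi V ω n₁ n₂ γ.1)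

/-- the class F(c): nonnegative bounded functions with sup φ ≤ c·φ(0) -/
def Fset (d : ℕ) (c : ℝ) : Set (X d → ℝ) :=
  {φ | (∀ x, 0 ≤ φ x) ∧ ∀ x, φ x ≤ c * φ 0}

/-- P is the i.i.d. Bernoulli(1/2) product measure on {−1,1}^ℤ ≃ ℤ → Bool -/
def IsBernoulli (P : Measure (ℤ → Bool)) : Prop :=
  IsProbabilityMeasure P ∧ ∀ (s : Finset ℤ) (f : ℤ → Bool),
    P {ω | ∀ i ∈ s, ω i = f i} = (1 / 2 : ENNReal) ^ s.card

/-- the shift θ^k -/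
def shift (k : ℤ) (ω : ℤ → Bool) : ℤ → Bool := fun n => ω (k + n)

/-- first standard basis vector e₁ of ℤ^d -/
def e1 (d : ℕ) : X d := fun i => if (i : ℕ) = 0 then 1 else 0

/-- the optimal path γ*: γ*_n = 0 if ω_n = 1, γ*_n = e₁ if ω_n = −1 -/
def gstar (d : ℕ) (ω : ℤ → Bool) : ℤ → X d := fun n => if ω n then 0 else e1 d

/-- the pair (m₁,m₂) is (λ,r)-good for ω -/
def Good (d : ℕ) (M₀ M₁ lam : ℝ) (r : ℕ) (m₁ m₂ : ℤ) (ω : ℤ → Bool) : Prop :=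
  m₁ < m₂ ∧
  (∀ j : ℤ, m₁ + 1 ≤ j → j ≤ m₁ + r → ω j = true) ∧
  (∀ k : ℕ, 1 ≤ k →
    (k : ℝ) * (M₁ + lam + Real.log (2 * (d : ℝ) + 1)) <
      ∑ j ∈ Finset.Icc (m₁ + r + 1) (m₁ + r + k), xi M₀ M₁ ω j) ∧
  (∀ j : ℤ, m₂ - r + 1 ≤ j → j ≤ m₂ → ω j = true) ∧
  (∀ k : ℕ, 1 ≤ k →
    (k : ℝ) * (M₁ + lam + Real.log (2 * (d : ℝ) + 1)) <
      ∑ j ∈ Finset.Icc (m₂ - r - k + 1) (m₂ - r), xi M₀ M₁ ω j)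

/-- the ball B_r ⊆ ℤ^d as a finite set -/
noncomputable def ball (d r : ℕ) : Finset (X d) := Fintype.piFinset fun _ => Finset.Icc (-(r : ℤ)) (r : ℤ)

lemma ball_nonempty (d r : ℕ) : (ball d r).Nonempty :=
  ⟨fun _ => 0, by simp [ball, Fintype.mem_piFinset]⟩

/-- the Hilbert projective (pseudo)metric ρ_r on functions restricted to B_r -/
noncomputable def rho (d r : ℕ) (φ ψ : X d → ℝ) : ℝ :=
  Real.log ((ball d r).sup' (ball_nonempty d r) (fun x => φ x / ψ x) *
            (ball d r).sup' (ball_nonempty d r) (fun x => ψ x / φ x))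

/-- diam_r of a set of functions w.r.t. ρ_r -/
noncomputable def diamr (d r : ℕ) (A : Set (X d → ℝ)) : ℝ :=
  sSup {y | ∃ φ ∈ A, ∃ ψ ∈ A, y = rho d r φ ψ}

/-- the set G(λ,r) (with K₁ explicit): φ ∈ F(2K₁) with sup_{|x|>r} φ ≤ sup_{|x|≤r} φ -/
def Gset (d : ℕ) (K₁ : ℝ) (r : ℕ) : Set (X d → ℝ) :=
  {φ | φ ∈ Fset d (2 * K₁) ∧ ∀ x, r < nm x → ∃ z, nm z ≤ r ∧ φ x ≤ φ z}

/-- the set H(λ,r) (with K₁, K₂ explicit) -/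
def Hset (d : ℕ) (K₁ K₂ : ℝ) (r : ℕ) : Set (X d → ℝ) :=
  {φ | φ ∈ Gset d K₁ r ∧ (⨆ x, φ x) = 1 ∧ ∀ y, nm y ≤ r → 1 / K₂ ≤ φ y}

/-- finite-volume Gibbs measure on [n₁,n₂] for ω (paths represented as
functions ℤ → ℤ^d frozen outside [n₁,n₂]) -/
def FVGibbs (d : ℕ) (V : X d → ℝ) (ω : ℤ → Bool) (n₁ n₂ : ℤ)
    (μ : Measure (ℤ → X d)) : Prop :=
  IsProbabilityMeasure μ ∧
  μ {γ | Adm n₁ n₂ γ ∧ Frozen n₁ n₂ γ} = 1 ∧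
  ∀ γ : ℤ → X d, Adm n₁ n₂ γ →
    μ {α | α n₁ = γ n₁ ∧ α n₂ = γ n₂} ≠ 0 →
    μ {α | ∀ n : ℤ, n₁ ≤ n → n ≤ n₂ → α n = γ n} =
      ENNReal.ofReal (Real.exp (Phi V ω n₁ n₂ γ) / Z V ω n₁ n₂ (γ n₁) (γ n₂)) *
        μ {α | α n₁ = γ n₁ ∧ α n₂ = γ n₂}

/-- (infinite-volume) Gibbs measure for ω -/
def GibbsMeasure (d : ℕ) (V : X d → ℝ) (ω : ℤ → Bool) (μ : Measure (ℤ → X d)) : Prop :=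
  IsProbabilityMeasure μ ∧
  μ {α | ∀ n : ℤ, stepOK (α n) (α (n + 1))} = 1 ∧
  ∀ n₁ n₂ : ℤ, n₁ < n₂ → ∀ γ : ℤ → X d, Adm n₁ n₂ γ →
    μ {α | α n₁ = γ n₁ ∧ α n₂ = γ n₂} ≠ 0 →
    μ {α | ∀ n : ℤ, n₁ ≤ n → n ≤ n₂ → α n = γ n} =
      ENNReal.ofReal (Real.exp (Phi V ω n₁ n₂ γ) / Z V ω n₁ n₂ (γ n₁) (γ n₂)) *
        μ {α | α n₁ = γ n₁ ∧ α n₂ = γ n₂}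

/-- the weak localization condition for a measure on two-sided paths -/
def WeakLoc (d : ℕ) (μ : Measure (ℤ → X d)) : Prop :=
  ∀ ε : ℝ, 0 < ε → ∃ r : ℕ,
    Filter.liminf (fun n : ℤ => μ {α | r < nm (α n)}) Filter.atTop < ENNReal.ofReal ε ∧
    Filter.liminf (fun n : ℤ => μ {α | r < nm (α n)}) Filter.atBot < ENNReal.ofReal ε

/-- normalized positive eigenfunction of the cocycle T -/
def IsEigen (d : ℕ) (V : X d → ℝ) (P : Measure (ℤ → Bool))
    (u : (ℤ → Bool) → X d → ℝ) : Prop :=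
  (∀ x : X d, Measurable fun ω => u ω x) ∧
  ∀ᵐ ω ∂P, (∀ x, 0 < u ω x) ∧ BddAbove (Set.range (u ω)) ∧ (⨆ x, u ω x) = 1 ∧
    ∃ κ : ℝ, 0 < κ ∧ ∀ x, T V ω 0 1 (u ω) x = κ * u (shift 1 ω) x


section Aux
variable {d : ℕ}

lemma stepOK_coord {x y : X d} (h : stepOK x y) (i : Fin d) : (y i - x i).natAbs ≤ 1 :=
  le_trans (Finset.single_le_sum (f := fun i => (y i - x i).natAbs)
    (fun _ _ => Nat.zero_le _) (Finset.mem_univ i)) h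

lemma nm_le_iff {x : X d} {r : ℕ} : nm x ≤ r ↔ ∀ i, (x i).natAbs ≤ r := by
  simp [nm, Finset.sup_le_iff]

lemma stepOK_nm {x y : X d} (h : stepOK x y) : nm y ≤ nm x + 1 := by
  rw [nm_le_iff]
  intro i
  have h1 := stepOK_coord h i
  have h2 : (x i).natAbs ≤ nm x := Finset.le_sup (f := fun i => (x i).natAbs) (Finset.mem_univ i)
  omega

lemma stepOK_self (x : X d) : stepOK x x := by simp [stepOK]

lemma e1_ne_zero (hd : 1 ≤ d) : e1 d ≠ 0 := by
  intro h
  have := congrFun h ⟨0, hd⟩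
  simp [e1] at this

lemma step01 (hd : 1 ≤ d) {a b : X d} (ha : a = 0 ∨ a = e1 d) (hb : b = 0 ∨ b = e1 d) :
    stepOK a b := by
  have he : (∑ i, ((e1 d) i).natAbs) = 1 := by
    rw [Finset.sum_eq_single ⟨0, hd⟩]
    · simp [e1]
    · intro j _ hj
      simp only [e1]
      rw [if_neg, Int.natAbs_zero]
      simpa [Fin.ext_iff] using hj
    · simp
  have he' : (∑ i, (-(e1 d) i).natAbs) = 1 := by
    rw [← he]; exact Finset.sum_congr rfl (fun i _ => by simp)
  rcases ha with rfl | rfl <;> rcases hb with rfl | rfl <;>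
    simp [stepOK, he, he']

end Aux

section Aux2
variable {d : ℕ}

/-- the step set as a subtype -/
def SOKt (d : ℕ) : Type := {v : X d // (∑ i, (v i).natAbs) ≤ 1}

lemma SOK_struct {v : X d} (h : (∑ i, (v i).natAbs) ≤ 1) {i : Fin d} (hi : v i ≠ 0) :
    (v i = if 0 < v i then 1 else -1) ∧ ∀ j, j ≠ i → v j = 0 := by
  have h1 : (v i).natAbs ≤ 1 :=
    le_trans (Finset.single_le_sum (f := fun i => (v i).natAbs)
      (fun _ _ => Nat.zero_le _) (Finset.mem_univ i)) h
  have h2 : (v i).natAbs = 1 := by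
    have := Int.natAbs_eq_zero.not.2 hi
    omega
  constructor
  · rcases Int.natAbs_eq_iff.1 h2 with h3 | h3 <;> rw [h3] <;> norm_num
  · intro j hj
    have h4 : (v i).natAbs + (v j).natAbs ≤ 1 := by
      calc (v i).natAbs + (v j).natAbs = ∑ k ∈ ({i, j} : Finset (Fin d)), (v k).natAbs := by
            rw [Finset.sum_pair (Ne.symm hj)]
        _ ≤ ∑ k, (v k).natAbs := Finset.sum_le_sum_of_subset (Finset.subset_univ _)
        _ ≤ 1 := h
    have : (v j).natAbs = 0 := by omega
    exact Int.natAbs_eq_zero.1 this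

noncomputable def SOKemb : SOKt d → Option (Fin d × Bool) := fun v =>
  if h : v.1 = 0 then none
  else
    have h' : ∃ i, v.1 i ≠ 0 := by
      by_contra hc
      push_neg at hc
      exact h (funext hc)
    some (h'.choose, decide (0 < v.1 h'.choose))

lemma SOKemb_none {v : SOKt d} (h : SOKemb v = none) : v.1 = 0 := by
  unfold SOKemb at h
  by_cases h0 : v.1 = 0
  · exact h0
  · rw [dif_neg h0] at h
    exact absurd h (by simp)

lemma SOKemb_some {v : SOKt d} {i : Fin d} {b : Bool} (h : SOKemb v = some (i, b)) :
    v.1 = fun j => if j = i then (if b then 1 else -1) else 0 := by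
  unfold SOKemb at h
  by_cases h0 : v.1 = 0
  · rw [dif_pos h0] at h
    exact absurd h (by simp)
  rw [dif_neg h0] at h
  have hv : ∃ i, v.1 i ≠ 0 := by
    by_contra hc; push_neg at hc; exact h0 (funext hc)
  simp only [Option.some.injEq, Prod.mk.injEq] at h
  obtain ⟨h1, h2⟩ := h
  have h1' : hv.choose = i := h1
  have h2' : decide (0 < v.1 hv.choose) = b := h2
  have H := SOK_struct v.2 hv.choose_spec
  funext j
  by_cases hj : j = i
  · subst hj
    rw [← h1', H.1]
    cases b with
    | true =>
      have : 0 < v.1 hv.choose := of_decide_eq_true h2'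
      simp [this]
    | false =>
      have : ¬ 0 < v.1 hv.choose := of_decide_eq_false h2'
      simp [this]
  · rw [if_neg hj]
    exact H.2 j (by rw [h1']; exact hj)

lemma SOKemb_inj : Function.Injective (SOKemb (d := d)) := by
  intro v w hvw
  apply Subtype.ext
  match hw : SOKemb w with
  | none => rw [SOKemb_none (hvw.trans hw), SOKemb_none hw]
  | some (i, b) => rw [SOKemb_some (hvw.trans hw), SOKemb_some hw]

instance : Finite (SOKt d) := Finite.of_injective _ SOKemb_inj

noncomputable instance : Fintype (SOKt d) := Fintype.ofFinite _

lemma card_SOKt_le : Fintype.card (SOKt d) ≤ 2 * d + 1 := by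
  have := Fintype.card_le_of_injective _ (SOKemb_inj (d := d))
  simpa [Fintype.card_option, Fintype.card_prod, two_mul, mul_comm] using this

end Aux2

section Paths
variable {d : ℕ}

def ext {n : ℕ} (s : Fin n → SOKt d) : ℕ → X d :=
  fun j => if h : j < n then (s ⟨j, h⟩).1 else 0

lemma ext_lt {n : ℕ} (s : Fin n → SOKt d) {j : ℕ} (hj : j < n) :
    ext s j = (s ⟨j, hj⟩).1 := dif_pos hj

lemma ext_sum_le {n : ℕ} (s : Fin n → SOKt d) (j : ℕ) :
    (∑ i, (ext s j i).natAbs) ≤ 1 := by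
  unfold ext
  split_ifs with h
  · exact (s ⟨j, h⟩).2
  · simp

def pathOf (n : ℕ) (y : X d) (s : Fin n → SOKt d) : ℤ → X d :=
  fun m => y - ∑ j ∈ Finset.range ((-m).toNat ⊓ n), ext s j

lemma pathOf_neg_natCast {n : ℕ} (y : X d) (s : Fin n → SOKt d) (k : ℕ) :
    pathOf n y s (-(k : ℤ)) = y - ∑ j ∈ Finset.range (k ⊓ n), ext s j := by
  simp [pathOf]

lemma pathOf_nonneg {n : ℕ} (y : X d) (s : Fin n → SOKt d) {m : ℤ} (hm : 0 ≤ m) :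
    pathOf n y s m = y := by
  have : (-m).toNat = 0 := by omega
  simp [pathOf, this]

lemma pathOf_zero {n : ℕ} (y : X d) (s : Fin n → SOKt d) : pathOf n y s 0 = y :=
  pathOf_nonneg y s le_rfl

lemma pathOf_le_neg_n {n : ℕ} (y : X d) (s : Fin n → SOKt d) {m : ℤ} (hm : m ≤ -(n:ℤ)) :
    pathOf n y s m = pathOf n y s (-(n:ℤ)) := by
  have h1 : (-m).toNat ⊓ n = n := by omega
  have h2 : (-(-(n:ℤ))).toNat ⊓ n = n := by omega
  simp [pathOf, h1, h2]

lemma pathOf_step {n : ℕ} (y : X d) (s : Fin n → SOKt d) {k : ℕ} (hk : k < n) :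
    pathOf n y s (-(k:ℤ)) - pathOf n y s (-(k:ℤ) - 1) = ext s k := by
  have h1 : -(k:ℤ) - 1 = -((k+1 : ℕ) : ℤ) := by push_cast; ring
  rw [h1, pathOf_neg_natCast, pathOf_neg_natCast]
  have h2 : k ⊓ n = k := by omega
  have h3 : (k+1) ⊓ n = k + 1 := by omega
  rw [h2, h3, Finset.sum_range_succ]
  abel

lemma pathOf_adm {n : ℕ} (y : X d) (s : Fin n → SOKt d) :
    Adm (-(n:ℤ)) 0 (pathOf n y s) := by
  intro m hm hm'
  set k : ℕ := (-(m+1)).toNat with hk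
  have hm1 : m + 1 = -(k:ℤ) := by omega
  have hm0 : m = -(k:ℤ) - 1 := by omega
  have hkn : k < n := by omega
  have hstep := pathOf_step y s hkn
  unfold stepOK
  calc (∑ i, (pathOf n y s (m+1) i - pathOf n y s m i).natAbs)
      = ∑ i, (ext s k i).natAbs := by
        apply Finset.sum_congr rfl
        intro i _
        rw [hm1, hm0, ← hstep]
        simp
    _ ≤ 1 := ext_sum_le s k

lemma pathOf_frozen {n : ℕ} (y : X d) (s : Fin n → SOKt d) :
    Frozen (-(n:ℤ)) 0 (pathOf n y s) :=
  ⟨fun m hm => pathOf_le_neg_n y s hm,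
   fun m hm => by rw [pathOf_nonneg y s hm, pathOf_zero]⟩

noncomputable def pathEquiv (n : ℕ) (y : X d) :
    (Fin n → SOKt d) ≃
      {γ : ℤ → X d // Adm (-(n:ℤ)) 0 γ ∧ Frozen (-(n:ℤ)) 0 γ ∧ γ 0 = y} where
  toFun s := ⟨pathOf n y s, pathOf_adm y s, pathOf_frozen y s, pathOf_zero y s⟩
  invFun γ := fun j =>
    ⟨γ.1 (-(j:ℤ)) - γ.1 (-(j:ℤ) - 1), by
      have hadm := γ.2.1 (-(j:ℤ) - 1) (by push_cast; omega) (by push_cast; omega)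
      have : -(j:ℤ) - 1 + 1 = -(j:ℤ) := by ring
      rw [this] at hadm
      unfold stepOK at hadm
      calc (∑ i, ((γ.1 (-(j:ℤ)) - γ.1 (-(j:ℤ) - 1)) i).natAbs)
          = ∑ i, (γ.1 (-(j:ℤ)) i - γ.1 (-(j:ℤ) - 1) i).natAbs := by simp
        _ ≤ 1 := hadm⟩
  left_inv s := by
    funext j
    apply Subtype.ext
    show pathOf n y s (-(j:ℤ)) - pathOf n y s (-(j:ℤ) - 1) = (s j).1
    rw [pathOf_step y s j.2, ext_lt s j.2]
  right_inv γ := by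
    apply Subtype.ext
    funext m
    show pathOf n y _ m = γ.1 m
    rcases le_or_gt 0 m with hm | hm
    · exact (pathOf_nonneg _ _ hm).trans (by rw [γ.2.2.1.2 m hm, γ.2.2.2])
    · set k : ℕ := (-m).toNat with hk
      have hmk : m = -(k:ℤ) := by omega
      rw [hmk]
      refine (pathOf_neg_natCast _ _ _).trans ?_
      have hsum : (∑ j ∈ Finset.range (k ⊓ n),
          ext (fun j : Fin n => (⟨γ.1 (-(j:ℤ)) - γ.1 (-(j:ℤ) - 1), by
            have hadm := γ.2.1 (-(j:ℤ) - 1) (by push_cast; omega) (by push_cast; omega)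
            have h0 : -(j:ℤ) - 1 + 1 = -(j:ℤ) := by ring
            rw [h0] at hadm
            unfold stepOK at hadm
            calc (∑ i, ((γ.1 (-(j:ℤ)) - γ.1 (-(j:ℤ) - 1)) i).natAbs)
                = ∑ i, (γ.1 (-(j:ℤ)) i - γ.1 (-(j:ℤ) - 1) i).natAbs := by simp
              _ ≤ 1 := hadm⟩ : SOKt d)) j) =
          γ.1 0 - γ.1 (-((k ⊓ n : ℕ) : ℤ)) := by
        have hstep : ∀ j ∈ Finset.range (k ⊓ n),
            ext (fun j : Fin n => (⟨γ.1 (-(j:ℤ)) - γ.1 (-(j:ℤ) - 1), by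
              have hadm := γ.2.1 (-(j:ℤ) - 1) (by push_cast; omega) (by push_cast; omega)
              have h0 : -(j:ℤ) - 1 + 1 = -(j:ℤ) := by ring
              rw [h0] at hadm
              unfold stepOK at hadm
              calc (∑ i, ((γ.1 (-(j:ℤ)) - γ.1 (-(j:ℤ) - 1)) i).natAbs)
                  = ∑ i, (γ.1 (-(j:ℤ)) i - γ.1 (-(j:ℤ) - 1) i).natAbs := by simp
                _ ≤ 1 := hadm⟩ : SOKt d)) j =
            (fun j : ℕ => γ.1 (-(j:ℤ))) j - (fun j : ℕ => γ.1 (-(j:ℤ))) (j+1) := by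
          intro j hj
          rw [Finset.mem_range] at hj
          have hjn : j < n := lt_of_lt_of_le hj (min_le_right _ _)
          refine (ext_lt _ hjn).trans ?_
          show γ.1 (-(j:ℤ)) - γ.1 (-(j:ℤ) - 1) = _
          have : -((j:ℤ)) - 1 = -(((j+1 : ℕ)) : ℤ) := by push_cast; ring
          rw [this]
        rw [Finset.sum_congr rfl hstep, Finset.sum_range_sub' (fun j : ℕ => γ.1 (-(j:ℤ)))]
        norm_num
      rw [hsum, γ.2.2.2, sub_sub_cancel]
      rcases le_or_gt k n with hkn | hkn
      · rw [min_eq_left hkn]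
      · rw [min_eq_right hkn.le]
        have := γ.2.2.1.1 (-(k:ℤ)) (by omega)
        rw [this]

lemma T_eq {n : ℕ} (V : X d → ℝ) (ω : ℤ → Bool) (u : X d → ℝ) (y : X d) :
    T V ω (-(n:ℤ)) 0 u y =
      ((2*(d:ℝ)+1) ^ (n:ℕ))⁻¹ *
        ∑ s : Fin n → SOKt d,
          Real.exp (Phi V ω (-(n:ℤ)) 0 (pathOf n y s)) * u (pathOf n y s (-(n:ℤ))) := by
  unfold T
  congr 1
  · rw [zero_sub, neg_neg, zpow_natCast]
  · rw [← Equiv.tsum_eq (pathEquiv n y)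
      (fun γ => Real.exp (Phi V ω (-(n:ℤ)) 0 γ.1) * u (γ.1 (-(n:ℤ)))), tsum_fintype]
    rfl

end Paths

section Seg
variable {d : ℕ} {M₀ M₁ : ℝ}

lemma nm_zero : nm (0 : X d) = 0 := by simp [nm]

lemma Icc_add_one_eq_Ioc (a b : ℤ) : Finset.Icc (a+1) b = Finset.Ioc a b := by
  ext m; simp only [Finset.mem_Icc, Finset.mem_Ioc]; omega

lemma card_Ioc_neg (t : ℕ) : (Finset.Ioc (-(t:ℤ)) 0).card = t := by
  rw [Int.card_Ioc]; omega

lemma gstar_mem (ω : ℤ → Bool) (m : ℤ) : gstar d ω m = 0 ∨ gstar d ω m = e1 d := by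
  unfold gstar; split_ifs <;> simp

lemma seg_upper (V : X d → ℝ) (hV1 : ∀ x : X d, x ≠ 0 → |V x| ≤ M₁)
    (ω : ℤ → Bool) (a b : ℤ) (γ : ℤ → X d)
    (hnz : ∀ m ∈ Finset.Ioc a b, γ m ≠ 0) :
    (∑ m ∈ Finset.Ioc a b, V (γ m) * sgn (ω m)) ≤ (Finset.Ioc a b).card * M₁ := by
  rw [Finset.card_eq_sum_ones, Nat.cast_sum, Finset.sum_mul]
  apply Finset.sum_le_sum
  intro m hm
  have h1 : |V (γ m) * sgn (ω m)| ≤ M₁ := by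
    rw [abs_mul]
    have h2 : |sgn (ω m)| = 1 := by unfold sgn; split_ifs <;> simp
    rw [h2, mul_one]
    exact hV1 _ (hnz m hm)
  calc V (γ m) * sgn (ω m) ≤ |V (γ m) * sgn (ω m)| := le_abs_self _
    _ ≤ M₁ := h1
    _ = (1:ℕ) * M₁ := by ring

lemma seg_lower (hd : 1 ≤ d) (hM₀ : 0 ≤ M₀) (hM₁ : 0 ≤ M₁)
    (V : X d → ℝ) (hV0 : V 0 = M₀) (hV1 : ∀ x : X d, x ≠ 0 → |V x| ≤ M₁)
    (ω : ℤ → Bool) (t : ℕ) (ht : 1 ≤ t) (γ : ℤ → X d)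
    (hmid : ∀ m : ℤ, -(t:ℤ) < m → m < 0 → γ m = gstar d ω m) (h0 : γ 0 = 0) :
    (∑ m ∈ Finset.Ioc (-(t:ℤ)) 0, xi M₀ M₁ ω m) - M₀ ≤
      ∑ m ∈ Finset.Ioc (-(t:ℤ)) 0, V (γ m) * sgn (ω m) := by
  have key : ∀ m ∈ Finset.Ioc (-(t:ℤ)) 0,
      xi M₀ M₁ ω m + (if m = 0 then -M₀ else 0) ≤ V (γ m) * sgn (ω m) := by
    intro m hm
    rw [Finset.mem_Ioc] at hm
    by_cases hm0 : m = 0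
    · subst hm0
      rw [if_pos rfl, h0, hV0]
      unfold xi sgn
      split_ifs with h <;> simp <;> nlinarith
    · rw [if_neg hm0]
      have hmlt : m < 0 := lt_of_le_of_ne hm.2 hm0
      rw [hmid m hm.1 hmlt]
      unfold xi sgn gstar
      by_cases h : ω m
      · simp [h, hV0]
      · simp only [h, if_false, Bool.false_eq_true]
        have := hV1 (e1 d) (e1_ne_zero hd)
        rw [add_zero, mul_neg_one]
        rw [abs_le] at this
        linarith [this.1]
  have h2 := Finset.sum_le_sum key
  rw [Finset.sum_add_distrib] at h2
  have h3 : (∑ m ∈ Finset.Ioc (-(t:ℤ)) 0, if m = 0 then (-M₀) else 0) = -M₀ := by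
    rw [Finset.sum_ite_eq' (Finset.Ioc (-(t:ℤ)) 0) (0:ℤ) (fun _ => -M₀)]
    rw [if_pos]
    rw [Finset.mem_Ioc]
    omega
  rw [h3] at h2
  linarith

end Seg

section Hyb
variable {d : ℕ}

/-- hybrid path: follow γ up to time -t, then the optimal pattern -/
def hyb (t : ℕ) (ω : ℤ → Bool) (γ : ℤ → X d) : ℤ → X d :=
  fun m => if m ≤ -(t:ℤ) then γ m else if m < 0 then gstar d ω m else 0

variable {t n : ℕ} {ω : ℤ → Bool} {γ : ℤ → X d}

lemma hyb_pre (ht : 1 ≤ t) {m : ℤ} (hm : m ≤ -(t:ℤ)) : hyb t ω γ m = γ m := if_pos hm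

lemma hyb_mid {m : ℤ} (hm1 : -(t:ℤ) < m) (hm2 : m < 0) : hyb t ω γ m = gstar d ω m := by
  unfold hyb; rw [if_neg (by omega), if_pos hm2]

lemma hyb_zero (ht : 1 ≤ t) : hyb t ω γ 0 = 0 := by
  unfold hyb; rw [if_neg (by omega), if_neg (by omega)]

lemma hyb_nonneg (ht : 1 ≤ t) {m : ℤ} (hm : 0 ≤ m) : hyb t ω γ m = 0 := by
  unfold hyb; rw [if_neg (by omega), if_neg (by omega)]

lemma hyb_mem (ht : 1 ≤ t) (hγt : γ (-(t:ℤ)) = 0) {m : ℤ} (hm : -(t:ℤ) ≤ m) :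
    hyb t ω γ m = 0 ∨ hyb t ω γ m = e1 d := by
  rcases eq_or_lt_of_le hm with hm' | hm'
  · left; rw [← hm', hyb_pre ht le_rfl, hγt]
  rcases lt_or_ge m 0 with h0 | h0
  · rw [hyb_mid hm' h0]; exact gstar_mem ω m
  · left; exact hyb_nonneg ht h0

lemma hyb_adm (hd : 1 ≤ d) (ht : 1 ≤ t) (htn : t ≤ n)
    (hγ : Adm (-(n:ℤ)) 0 γ) (hγt : γ (-(t:ℤ)) = 0) :
    Adm (-(n:ℤ)) 0 (hyb t ω γ) := by
  intro m hm hm'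
  rcases le_or_gt (m+1) (-(t:ℤ)) with h | h
  · rw [hyb_pre ht h, hyb_pre ht (by omega)]
    exact hγ m hm hm'
  · have hm1 : -(t:ℤ) ≤ m := by omega
    exact step01 hd (hyb_mem ht hγt hm1) (hyb_mem ht hγt (by omega))

lemma hyb_frozen (ht : 1 ≤ t) (htn : t ≤ n) (hγ : Frozen (-(n:ℤ)) 0 γ) :
    Frozen (-(n:ℤ)) 0 (hyb t ω γ) := by
  constructor
  · intro m hm
    rw [hyb_pre ht (by omega), hyb_pre ht (by omega), hγ.1 m hm]
  · intro m hm
    rw [hyb_nonneg ht hm, hyb_nonneg ht le_rfl]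

/-- Lipschitz property of pathOf -/
lemma nm_pathOf_le {y : X d} {s : Fin n → SOKt d} (k : ℕ) :
    nm y ≤ nm (pathOf n y s (-(k:ℤ))) + k := by
  induction k with
  | zero =>
    have : (-(0:ℕ):ℤ) = 0 := by norm_num
    rw [this, pathOf_zero]
    omega
  | succ k ih =>
    rcases lt_or_ge k n with hk | hk
    · have hstep := pathOf_step y s hk
      have hsok : stepOK (pathOf n y s (-(k:ℤ) - 1)) (pathOf n y s (-(k:ℤ))) := by
        unfold stepOK
        calc (∑ i, (pathOf n y s (-(k:ℤ)) i - pathOf n y s (-(k:ℤ)-1) i).natAbs)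
            = ∑ i, (ext s k i).natAbs := by
              apply Finset.sum_congr rfl
              intro i _
              rw [← hstep]; simp
          _ ≤ 1 := ext_sum_le s k
      have h2 := stepOK_nm hsok
      have h3 : -(k:ℤ) - 1 = -((k+1:ℕ):ℤ) := by push_cast; ring
      rw [h3] at h2
      omega
    · have h1 : pathOf n y s (-((k+1:ℕ):ℤ)) = pathOf n y s (-(n:ℤ)) :=
        pathOf_le_neg_n y s (by push_cast; omega)
      have h2 : pathOf n y s (-(k:ℕ):ℤ) = pathOf n y s (-(n:ℤ)) :=
        pathOf_le_neg_n y s (by push_cast; omega)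
      rw [h1, ← h2]
      omega

end Hyb

section Counting
variable {d : ℕ}

lemma card_fun_le (n t : ℕ) : Fintype.card (Fin t → SOKt d) ≤ (2*d+1)^t := by
  rw [Fintype.card_fun]
  exact Nat.pow_le_pow_left card_SOKt_le _ |>.trans (by rw [Fintype.card_fin])

lemma fiber_card {n : ℕ} (t : ℕ) (htn : t ≤ n) (B : Finset (Fin n → SOKt d))
    (π : (Fin n → SOKt d) → (Fin n → SOKt d))
    (hπ : ∀ s ∈ B, ∀ j : Fin n, t ≤ (j:ℕ) → π s j = s j)
    (s' : Fin n → SOKt d) [DecidableEq (Fin n → SOKt d)] :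
    (B.filter (fun s => π s = s')).card ≤ (2*d+1)^t := by
  have hinj : Set.InjOn (fun (s : Fin n → SOKt d) (i : Fin t) => s ⟨i.1, lt_of_lt_of_le i.2 htn⟩)
      ↑(B.filter (fun s => π s = s')) := by
    intro s₁ h₁ s₂ h₂ heq
    rw [Finset.coe_filter] at h₁ h₂
    obtain ⟨hB₁, hπ₁⟩ := h₁
    obtain ⟨hB₂, hπ₂⟩ := h₂
    funext j
    rcases lt_or_ge (j:ℕ) t with hj | hj
    · exact congrFun heq ⟨j.1, hj⟩
    · rw [← hπ s₁ hB₁ j hj, ← hπ s₂ hB₂ j hj, hπ₁, hπ₂]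
  calc (B.filter (fun s => π s = s')).card
      ≤ (Finset.univ : Finset (Fin t → SOKt d)).card :=
        Finset.card_le_card_of_injOn _ (fun _ _ => Finset.mem_univ _) hinj
    _ = Fintype.card (Fin t → SOKt d) := rfl
    _ ≤ (2*d+1)^t := card_fun_le n t

lemma sum_comp_le {n : ℕ} (t : ℕ) (htn : t ≤ n) (B : Finset (Fin n → SOKt d))
    (π : (Fin n → SOKt d) → (Fin n → SOKt d))
    (hπ : ∀ s ∈ B, ∀ j : Fin n, t ≤ (j:ℕ) → π s j = s j)
    (h : (Fin n → SOKt d) → ℝ) (hh : ∀ s, 0 ≤ h s) [DecidableEq (Fin n → SOKt d)] :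
    (∑ s ∈ B, h (π s)) ≤ ((2*d+1:ℝ))^t * ∑ s', h s' := by
  rw [Finset.sum_comp h π]
  calc (∑ s' ∈ B.image π, (B.filter (fun s => π s = s')).card • h s')
      ≤ ∑ s' ∈ B.image π, ((2*d+1:ℝ))^t * h s' := by
        apply Finset.sum_le_sum
        intro s' _
        rw [nsmul_eq_mul]
        apply mul_le_mul_of_nonneg_right _ (hh s')
        calc ((B.filter (fun s => π s = s')).card : ℝ)
            ≤ (((2*d+1)^t : ℕ) : ℝ) := by
              exact_mod_cast fiber_card t htn B π hπ s'
          _ = ((2*d+1:ℝ))^t := by push_cast; ring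
    _ ≤ ((2*d+1:ℝ))^t * ∑ s', h s' := by
        rw [← Finset.mul_sum]
        apply mul_le_mul_of_nonneg_left _ (by positivity)
        exact Finset.sum_le_sum_of_subset_of_nonneg (Finset.subset_univ _)
          (fun s _ _ => hh s)

lemma geom_tail (lam : ℝ) (hlam : 0 < lam) (r n : ℕ) :
    (∑ t ∈ Finset.Icc r n, Real.exp (-lam * t)) ≤
      Real.exp (-lam * r) / (1 - Real.exp (-lam)) := by
  set x := Real.exp (-lam) with hx
  have hx0 : 0 < x := Real.exp_pos _
  have hx1 : x < 1 := by rw [hx]; exact Real.exp_lt_one_iff.2 (by linarith)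
  have hexp : ∀ t : ℕ, Real.exp (-lam * t) = x ^ t := by
    intro t
    rw [hx, ← Real.exp_nat_mul]
    ring_nf
  calc (∑ t ∈ Finset.Icc r n, Real.exp (-lam * t)) = ∑ t ∈ Finset.Icc r n, x ^ t := by
        exact Finset.sum_congr rfl (fun t _ => hexp t)
    _ ≤ x ^ r / (1 - x) := by
        rcases le_or_gt r n with hrn | hrn
        · rw [show Finset.Icc r n = Finset.Ico r (n+1) by rw [Finset.Ico_add_one_right_eq_Icc],
            Finset.sum_Ico_eq_sum_range]
          have : ∀ k ∈ Finset.range (n+1-r), x ^ (r + k) = x ^ r * x ^ k := fun k _ =>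
            pow_add x r k
          rw [Finset.sum_congr rfl this, ← Finset.mul_sum]
          rw [div_eq_mul_inv]
          apply mul_le_mul_of_nonneg_left _ (by positivity)
          have h1x : (0:ℝ) < 1 - x := by linarith
          have hgeom := geom_sum_eq (ne_of_lt hx1) (n+1-r)
          have hpow : 0 ≤ x ^ (n+1-r) := by positivity
          have heq : (x ^ (n+1-r) - 1) / (x - 1) = (1 - x ^ (n+1-r)) / (1 - x) := by
            rw [div_eq_div_iff (by linarith) (by linarith)]; ring
          calc (∑ i ∈ Finset.range (n+1-r), x ^ i) = (1 - x ^ (n+1-r))/(1-x) := by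
                rw [hgeom, heq]
            _ ≤ 1/(1-x) := by
                apply div_le_div_of_nonneg_right (by linarith) (le_of_lt h1x)
            _ = (1-x)⁻¹ := one_div _
        · rw [Finset.Icc_eq_empty (by omega)]
          have h1x : (0:ℝ) < 1 - x := by linarith
          simp
          positivity
    _ = Real.exp (-lam * r) / (1 - x) := by rw [hexp r]

end Counting

section MoreAux
variable {d : ℕ}

lemma pathEquiv_symm_val {n : ℕ} {y : X d}
    (γ : {γ : ℤ → X d // Adm (-(n:ℤ)) 0 γ ∧ Frozen (-(n:ℤ)) 0 γ ∧ γ 0 = y}) (j : Fin n) :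
    (((pathEquiv n y).symm γ) j).1 = γ.1 (-(j:ℤ)) - γ.1 (-(j:ℤ) - 1) := rfl

lemma pathEquiv_symm_path {n : ℕ} {y : X d}
    (γ : {γ : ℤ → X d // Adm (-(n:ℤ)) 0 γ ∧ Frozen (-(n:ℤ)) 0 γ ∧ γ 0 = y}) :
    pathOf n y ((pathEquiv n y).symm γ) = γ.1 :=
  congrArg Subtype.val ((pathEquiv n y).apply_symm_apply γ)

lemma Phi_eq (V : X d → ℝ) (ω : ℤ → Bool) (n : ℕ) (γ : ℤ → X d) :
    Phi V ω (-(n:ℤ)) 0 γ = ∑ m ∈ Finset.Ioc (-(n:ℤ)) 0, V (γ m) * sgn (ω m) := by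
  unfold Phi; rw [Icc_add_one_eq_Ioc]

lemma expL_pow (d n : ℕ) :
    Real.exp (-( (n:ℝ) * Real.log (2*(d:ℝ)+1))) * ((2*(d:ℝ)+1))^(n:ℕ) = 1 := by
  have hdpos : (0:ℝ) < 2*(d:ℝ)+1 := by positivity
  rw [Real.exp_neg, Real.exp_nat_mul, Real.exp_log hdpos]
  rw [inv_mul_cancel₀ (by positivity)]

lemma sum_Ioc_split (F : ℤ → ℝ) {a b c : ℤ} (h1 : a ≤ b) (h2 : b ≤ c) :
    (∑ m ∈ Finset.Ioc a b, F m) + (∑ m ∈ Finset.Ioc b c, F m) = ∑ m ∈ Finset.Ioc a c, F m := by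
  rw [← Finset.sum_union (by
    rw [Finset.disjoint_left]
    intro m hm1 hm2
    rw [Finset.mem_Ioc] at hm1 hm2
    omega), Finset.Ioc_union_Ioc_eq_Ioc h1 h2]

end MoreAux

/-- Lemma 3.1 (localization for the operator T). -/
theorem statement1
    (d : ℕ) (hd : 1 ≤ d) (M₀ M₁ : ℝ) (hM₀ : 0 ≤ M₀) (hM₁ : 0 ≤ M₁)
    (hl0 : 0 < (M₀ - 3 * M₁) / 2 - Real.log (2 * (d : ℝ) + 1))
    (lam : ℝ) (hlam : 0 < lam)
    (hlam' : lam < (M₀ - 3 * M₁) / 2 - Real.log (2 * (d : ℝ) + 1)) :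
    ∃ K₁ : ℝ, 1 ≤ K₁ ∧
      ∀ (V : X d → ℝ), V 0 = M₀ → (∀ x : X d, x ≠ 0 → |V x| ≤ M₁) →
      ∀ (ω : ℤ → Bool) (N : ℕ),
        (∀ k : ℕ, N ≤ k →
          (k : ℝ) * (M₁ + lam + Real.log (2 * (d : ℝ) + 1)) <
            ∑ m ∈ Finset.Icc (-(k : ℤ) + 1) 0, xi M₀ M₁ ω m) →
        ∀ c : ℝ, 1 ≤ c → ∀ φ ∈ Fset d c, ∀ y : X d, N ≤ nm y → ∀ n : ℕ, N ≤ n →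
          T V ω (-(n : ℤ)) 0 φ y ≤
            K₁ * (Real.exp (-lam * nm y) + c * Real.exp (-lam * n)) *
              T V ω (-(n : ℤ)) 0 φ 0 := by
  classical
  have hd1 : (1:ℝ) ≤ (d:ℝ) := by exact_mod_cast hd
  have hdpos : (0:ℝ) < 2*(d:ℝ)+1 := by linarith
  set L : ℝ := Real.log (2*(d:ℝ)+1) with hLdef
  have hx1 : Real.exp (-lam) < 1 := Real.exp_lt_one_iff.2 (by linarith)
  have hx0 : (0:ℝ) < 1 - Real.exp (-lam) := by linarith
  have hE1 : (1:ℝ) ≤ Real.exp M₀ := Real.one_le_exp hM₀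
  have hEpos : (0:ℝ) < Real.exp M₀ := Real.exp_pos _
  have hinv0 : (0:ℝ) ≤ (1 - Real.exp (-lam))⁻¹ := by positivity
  refine ⟨Real.exp M₀ * (1 + (1 - Real.exp (-lam))⁻¹), by nlinarith, ?_⟩
  intro V hV0 hV1 ω N hω c hc φ hφ y hy n hn
  obtain ⟨hφ0, hφc⟩ := hφ
  -- N ≥ 1
  have hN1 : 1 ≤ N := by
    by_contra hN
    have h0 := hω 0 (by omega)
    rw [show (-(0:ℕ):ℤ)+1 = 1 by norm_num, Finset.Icc_eq_empty (by norm_num)] at h0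
    simp at h0
  have hn1 : 1 ≤ n := le_trans hN1 hn
  have hy1 : 1 ≤ nm y := le_trans hN1 hy
  have hyne : y ≠ 0 := by
    intro h; rw [h, nm_zero] at hy1; omega
  -- notation
  set f : (Fin n → SOKt d) → ℝ := fun s =>
    Real.exp (Phi V ω (-(n:ℤ)) 0 (pathOf n y s)) * φ (pathOf n y s (-(n:ℤ))) with hfdef
  set g : (Fin n → SOKt d) → ℝ := fun s =>
    Real.exp (Phi V ω (-(n:ℤ)) 0 (pathOf n (0:X d) s)) * φ (pathOf n (0:X d) s (-(n:ℤ)))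
    with hgdef
  have hf0 : ∀ s, 0 ≤ f s := fun s => mul_nonneg (Real.exp_pos _).le (hφ0 _)
  have hg0 : ∀ s, 0 ≤ g s := fun s => mul_nonneg (Real.exp_pos _).le (hφ0 _)
  set Z0 : ℝ := ∑ s, g s with hZ0def
  have hZ0 : 0 ≤ Z0 := Finset.sum_nonneg (fun s _ => hg0 s)
  -- xi partial sums
  set Sξ : ℕ → ℝ := fun k => ∑ m ∈ Finset.Ioc (-(k:ℤ)) 0, xi M₀ M₁ ω m with hSdef
  have hωS : ∀ k : ℕ, N ≤ k → (k:ℝ) * (M₁ + lam + L) < Sξ k := by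
    intro k hk
    have := hω k hk
    rwa [Icc_add_one_eq_Ioc] at this
  -- lower bound for Z0
  have hZlow : Real.exp (Sξ n - M₀) * φ 0 ≤ Z0 := by
    set s0 : Fin n → SOKt d := fun _ => ⟨0, by simp⟩ with hs0def
    have hs0path : ∀ m : ℤ, pathOf n (0:X d) s0 m = 0 := by
      intro m
      unfold pathOf
      have hz : ∀ j ∈ Finset.range ((-m).toNat ⊓ n), ext s0 j = 0 := by
        intro j _
        unfold ext
        split_ifs <;> rfl
      rw [Finset.sum_congr rfl hz]
      simp
    have hAdm : Adm (-(n:ℤ)) 0 (hyb n ω (pathOf n (0:X d) s0)) :=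
      hyb_adm hd hn1 le_rfl (pathOf_adm _ _) (hs0path _)
    have hFro : Frozen (-(n:ℤ)) 0 (hyb n ω (pathOf n (0:X d) s0)) :=
      hyb_frozen hn1 le_rfl (pathOf_frozen _ _)
    set γopt : {γ : ℤ → X d // Adm (-(n:ℤ)) 0 γ ∧ Frozen (-(n:ℤ)) 0 γ ∧ γ 0 = (0:X d)} :=
      ⟨hyb n ω (pathOf n (0:X d) s0), hAdm, hFro, hyb_zero hn1⟩ with hγoptdef
    set sopt := (pathEquiv n (0:X d)).symm γopt with hsoptdef
    have hsopt : pathOf n (0:X d) sopt = hyb n ω (pathOf n (0:X d) s0) :=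
      pathEquiv_symm_path γopt
    have hle : Real.exp (Sξ n - M₀) * φ 0 ≤ g sopt := by
      rw [hgdef]
      simp only []
      rw [hsopt]
      have hend : hyb n ω (pathOf n (0:X d) s0) (-(n:ℤ)) = 0 := by
        rw [hyb_pre hn1 le_rfl, hs0path]
      rw [hend]
      apply mul_le_mul_of_nonneg_right _ (hφ0 0)
      rw [Real.exp_le_exp, Phi_eq]
      exact seg_lower hd hM₀ hM₁ V hV0 hV1 ω n hn1 _
        (fun m h1 h2 => hyb_mid h1 h2) (hyb_zero hn1)
    exact le_trans hle (Finset.single_le_sum (fun s _ => hg0 s) (Finset.mem_univ sopt))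
  have hZup : Real.exp (Sξ n) * φ 0 ≤ Real.exp M₀ * Z0 := by
    have h1 : Real.exp (Sξ n) = Real.exp M₀ * Real.exp (Sξ n - M₀) := by
      rw [← Real.exp_add]; ring_nf
    rw [h1, mul_assoc]
    exact mul_le_mul_of_nonneg_left hZlow hEpos.le
  -- the partition
  set A : Finset (Fin n → SOKt d) :=
    Finset.univ.filter (fun s => ∀ m : ℤ, -(n:ℤ) ≤ m → m ≤ 0 → pathOf n y s m ≠ 0)
    with hAdef
  set B : ℕ → Finset (Fin n → SOKt d) := fun t =>
    Finset.univ.filter (fun s => pathOf n y s (-(t:ℤ)) = 0 ∧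
      ∀ m : ℤ, -(t:ℤ) < m → m ≤ 0 → pathOf n y s m ≠ 0) with hBdef
  have hcover : (Finset.univ : Finset (Fin n → SOKt d)) =
      A ∪ (Finset.Icc 1 n).biUnion B := by
    apply subset_antisymm _ (Finset.subset_univ _)
    intro s _
    by_cases hA : ∀ m : ℤ, -(n:ℤ) ≤ m → m ≤ 0 → pathOf n y s m ≠ 0
    · exact Finset.mem_union_left _ (Finset.mem_filter.2 ⟨Finset.mem_univ _, hA⟩)
    · push_neg at hA
      obtain ⟨m, hm1, hm2, hm3⟩ := hA
      have hm0 : m ≠ 0 := by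
        intro h; rw [h, pathOf_zero] at hm3; exact hyne hm3
      set tset : Finset ℕ :=
        (Finset.Icc 1 n).filter (fun t => pathOf n y s (-(t:ℤ)) = 0) with htsetdef
      have hne : tset.Nonempty := by
        refine ⟨(-m).toNat, Finset.mem_filter.2 ⟨Finset.mem_Icc.2 (by omega), ?_⟩⟩
        rw [show (-(((-m).toNat:ℕ)):ℤ) = m by omega]
        exact hm3
      set t := tset.min' hne with htdef
      have htmem := tset.min'_mem hne
      rw [Finset.mem_filter, Finset.mem_Icc] at htmem
      apply Finset.mem_union_right
      apply Finset.mem_biUnion.2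
      refine ⟨t, Finset.mem_Icc.2 ⟨htmem.1.1, htmem.1.2⟩, Finset.mem_filter.2
        ⟨Finset.mem_univ _, htmem.2, ?_⟩⟩
      intro m' hm'1 hm'2 hm'3
      have hm'0 : m' ≠ 0 := by
        intro h; rw [h, pathOf_zero] at hm'3; exact hyne hm'3
      have hk' : (-m').toNat ∈ tset := by
        refine Finset.mem_filter.2 ⟨Finset.mem_Icc.2 (by omega), ?_⟩
        rw [show (-(((-m').toNat:ℕ)):ℤ) = m' by omega]
        exact hm'3
      have := tset.min'_le _ hk'
      omega
  have hdisjA : Disjoint A ((Finset.Icc 1 n).biUnion B) := by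
    rw [Finset.disjoint_right]
    intro s hs hsA
    rw [Finset.mem_biUnion] at hs
    obtain ⟨t, ht, hst⟩ := hs
    rw [Finset.mem_Icc] at ht
    rw [Finset.mem_filter] at hst hsA
    exact hsA.2 (-(t:ℤ)) (by omega) (by omega) hst.2.1
  have hdisjB : (↑(Finset.Icc 1 n) : Set ℕ).PairwiseDisjoint B := by
    intro t₁ ht₁ t₂ ht₂ hne
    have key : ∀ u v : ℕ, u < v → Disjoint (B u) (B v) := by
      intro u v huv
      rw [Finset.disjoint_left]
      intro s hsu hsv
      rw [Finset.mem_filter] at hsu hsv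
      exact hsv.2.2 (-(u:ℤ)) (by omega) (by omega) hsu.2.1
    rcases lt_or_gt_of_ne hne with h | h
    · exact key _ _ h
    · exact (key _ _ h).symm
  have hsplit : (∑ s, f s) = (∑ s ∈ A, f s) + ∑ t ∈ Finset.Icc 1 n, ∑ s ∈ B t, f s := by
    conv_lhs => rw [hcover]
    rw [Finset.sum_union hdisjA, Finset.sum_biUnion hdisjB]
  -- Case A
  have hA_bound : (∑ s ∈ A, f s) ≤ c * Real.exp (-lam * n) * (Real.exp M₀ * Z0) := by
    have hpt : ∀ s ∈ A, f s ≤ Real.exp ((n:ℝ) * M₁) * (c * φ 0) := by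
      intro s hs
      rw [Finset.mem_filter] at hs
      have hPhi : Phi V ω (-(n:ℤ)) 0 (pathOf n y s) ≤ (n:ℝ) * M₁ := by
        rw [Phi_eq]
        have := seg_upper V hV1 ω (-(n:ℤ)) 0 (pathOf n y s) (fun m hm => by
          rw [Finset.mem_Ioc] at hm
          exact hs.2 m (by omega) hm.2)
        rwa [card_Ioc_neg n] at this
      exact mul_le_mul (Real.exp_le_exp.2 hPhi) (hφc _) (hφ0 _) (Real.exp_pos _).le
    calc (∑ s ∈ A, f s) ≤ A.card • (Real.exp ((n:ℝ) * M₁) * (c * φ 0)) :=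
          Finset.sum_le_card_nsmul A f _ hpt
      _ = (A.card : ℝ) * (Real.exp ((n:ℝ) * M₁) * (c * φ 0)) := nsmul_eq_mul _ _
      _ ≤ ((2*(d:ℝ)+1))^(n:ℕ) * (Real.exp ((n:ℝ) * M₁) * (c * φ 0)) := by
          apply mul_le_mul_of_nonneg_right _
            (mul_nonneg (Real.exp_pos _).le (mul_nonneg (by linarith) (hφ0 0)))
          calc (A.card : ℝ) ≤ (Fintype.card (Fin n → SOKt d) : ℝ) := by
                exact_mod_cast Finset.card_le_card (Finset.subset_univ A)
            _ ≤ (((2*d+1)^n : ℕ) : ℝ) := by exact_mod_cast card_fun_le n n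
            _ = ((2*(d:ℝ)+1))^(n:ℕ) := by push_cast; ring
      _ ≤ ((2*(d:ℝ)+1))^(n:ℕ) *
            (Real.exp (Sξ n - lam * n - (n:ℝ) * L) * (c * φ 0)) := by
          apply mul_le_mul_of_nonneg_left _ (by positivity)
          apply mul_le_mul_of_nonneg_right _ (mul_nonneg (by linarith) (hφ0 0))
          rw [Real.exp_le_exp]
          have := hωS n hn
          nlinarith
      _ = (c * Real.exp (-lam * n) * (Real.exp (Sξ n) * φ 0)) *
            (Real.exp (-((n:ℝ) * L)) * ((2*(d:ℝ)+1))^(n:ℕ)) := by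
          rw [show Sξ n - lam * n - (n:ℝ) * L = (Sξ n) + (-lam * n) + (-((n:ℝ)*L)) by ring,
            Real.exp_add, Real.exp_add]
          ring
      _ = c * Real.exp (-lam * n) * (Real.exp (Sξ n) * φ 0) := by
          rw [expL_pow d n, mul_one]
      _ ≤ c * Real.exp (-lam * n) * (Real.exp M₀ * Z0) := by
          apply mul_le_mul_of_nonneg_left hZup (by positivity)
  -- Case B
  have hB_bound : ∀ t ∈ Finset.Icc 1 n, (∑ s ∈ B t, f s) ≤
      (if nm y ≤ t then Real.exp M₀ * Real.exp (-lam * t) * Z0 else 0) := by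
    intro t ht
    rw [Finset.mem_Icc] at ht
    obtain ⟨ht1, htn⟩ := ht
    by_cases hty : nm y ≤ t
    swap
    · rw [if_neg hty]
      have hBe : B t = ∅ := by
        apply Finset.eq_empty_of_forall_notMem
        intro s hs
        rw [Finset.mem_filter] at hs
        have := nm_pathOf_le (y := y) (s := s) t
        rw [hs.2.1, nm_zero] at this
        omega
      rw [hBe, Finset.sum_empty]
    rw [if_pos hty]
    -- the projection map
    set π : (Fin n → SOKt d) → (Fin n → SOKt d) := fun s =>
      if h : pathOf n y s (-(t:ℤ)) = 0 then
        (pathEquiv n (0:X d)).symm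
          ⟨hyb t ω (pathOf n y s),
            hyb_adm hd ht1 htn (pathOf_adm _ _) h,
            hyb_frozen ht1 htn (pathOf_frozen _ _),
            hyb_zero ht1⟩
      else s with hπdef
    have hπpath : ∀ s ∈ B t, pathOf n (0:X d) (π s) = hyb t ω (pathOf n y s) := by
      intro s hs
      rw [Finset.mem_filter] at hs
      rw [hπdef]
      simp only [dif_pos hs.2.1]
      exact pathEquiv_symm_path _
    have hπj : ∀ s ∈ B t, ∀ j : Fin n, t ≤ (j:ℕ) → π s j = s j := by
      intro s hs j hj
      rw [Finset.mem_filter] at hs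
      apply Subtype.ext
      rw [hπdef]
      simp only [dif_pos hs.2.1]
      rw [pathEquiv_symm_val]
      show hyb t ω (pathOf n y s) (-(j:ℤ)) - hyb t ω (pathOf n y s) (-(j:ℤ)-1) = _
      rw [hyb_pre (m := -(j:ℤ)) ht1 (by push_cast; omega),
        hyb_pre (m := -(j:ℤ)-1) ht1 (by push_cast; omega),
        pathOf_step y s j.2, ext_lt s j.2]
    have hpt : ∀ s ∈ B t, f s ≤ Real.exp (M₀ - (t:ℝ) * (lam + L)) * g (π s) := by
      intro s hs
      have hπp := hπpath s hs
      rw [Finset.mem_filter] at hs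
      obtain ⟨-, hs0, hsnz⟩ := hs
      have hφeq : pathOf n (0:X d) (π s) (-(n:ℤ)) = pathOf n y s (-(n:ℤ)) := by
        rw [hπp, hyb_pre (m := -(n:ℤ)) ht1 (by push_cast; omega)]
      have hPhi : Phi V ω (-(n:ℤ)) 0 (pathOf n y s) ≤
          Phi V ω (-(n:ℤ)) 0 (pathOf n (0:X d) (π s)) + (M₀ - (t:ℝ) * (lam + L)) := by
        rw [Phi_eq, Phi_eq, hπp]
        have hsplit1 : (∑ m ∈ Finset.Ioc (-(n:ℤ)) (-(t:ℤ)),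
              V (pathOf n y s m) * sgn (ω m)) +
            (∑ m ∈ Finset.Ioc (-(t:ℤ)) 0, V (pathOf n y s m) * sgn (ω m)) =
            ∑ m ∈ Finset.Ioc (-(n:ℤ)) 0, V (pathOf n y s m) * sgn (ω m) :=
          sum_Ioc_split _ (by omega) (by omega)
        have hsplit2 : (∑ m ∈ Finset.Ioc (-(n:ℤ)) (-(t:ℤ)),
              V (hyb t ω (pathOf n y s) m) * sgn (ω m)) +
            (∑ m ∈ Finset.Ioc (-(t:ℤ)) 0, V (hyb t ω (pathOf n y s) m) * sgn (ω m)) =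
            ∑ m ∈ Finset.Ioc (-(n:ℤ)) 0, V (hyb t ω (pathOf n y s) m) * sgn (ω m) :=
          sum_Ioc_split _ (by omega) (by omega)
        rw [← hsplit1, ← hsplit2]
        have hpre : (∑ m ∈ Finset.Ioc (-(n:ℤ)) (-(t:ℤ)),
              V (pathOf n y s m) * sgn (ω m)) =
            ∑ m ∈ Finset.Ioc (-(n:ℤ)) (-(t:ℤ)), V (hyb t ω (pathOf n y s) m) * sgn (ω m) := by
          apply Finset.sum_congr rfl
          intro m hm
          rw [Finset.mem_Ioc] at hm
          rw [hyb_pre (m := m) ht1 hm.2]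
        have htail1 : (∑ m ∈ Finset.Ioc (-(t:ℤ)) 0, V (pathOf n y s m) * sgn (ω m)) ≤
            (t:ℝ) * M₁ := by
          have := seg_upper V hV1 ω (-(t:ℤ)) 0 (pathOf n y s) (fun m hm => by
            rw [Finset.mem_Ioc] at hm
            exact hsnz m hm.1 hm.2)
          rwa [card_Ioc_neg t] at this
        have htail2 : Sξ t - M₀ ≤
            ∑ m ∈ Finset.Ioc (-(t:ℤ)) 0, V (hyb t ω (pathOf n y s) m) * sgn (ω m) :=
          seg_lower hd hM₀ hM₁ V hV0 hV1 ω t ht1 _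
            (fun m h1 h2 => hyb_mid h1 h2) (hyb_zero ht1)
        have hxi : (t:ℝ) * (M₁ + lam + L) < Sξ t := hωS t (le_trans hy hty)
        rw [hpre]
        nlinarith
      calc f s = Real.exp (Phi V ω (-(n:ℤ)) 0 (pathOf n y s)) *
            φ (pathOf n y s (-(n:ℤ))) := rfl
        _ ≤ Real.exp (Phi V ω (-(n:ℤ)) 0 (pathOf n (0:X d) (π s)) +
              (M₀ - (t:ℝ) * (lam + L))) * φ (pathOf n y s (-(n:ℤ))) :=
            mul_le_mul_of_nonneg_right (Real.exp_le_exp.2 hPhi) (hφ0 _)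
        _ = Real.exp (M₀ - (t:ℝ) * (lam + L)) * g (π s) := by
            rw [Real.exp_add, hgdef]
            simp only []
            rw [hφeq]
            ring
    calc (∑ s ∈ B t, f s) ≤ ∑ s ∈ B t, Real.exp (M₀ - (t:ℝ) * (lam + L)) * g (π s) :=
          Finset.sum_le_sum hpt
      _ = Real.exp (M₀ - (t:ℝ) * (lam + L)) * ∑ s ∈ B t, g (π s) := by
          rw [Finset.mul_sum]
      _ ≤ Real.exp (M₀ - (t:ℝ) * (lam + L)) * (((2*(d:ℝ)+1))^(t:ℕ) * Z0) := by
          apply mul_le_mul_of_nonneg_left _ (Real.exp_pos _).le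
          exact sum_comp_le t htn (B t) π (hπj) g hg0
      _ = (Real.exp M₀ * Real.exp (-lam * t) * Z0) *
            (Real.exp (-((t:ℝ) * L)) * ((2*(d:ℝ)+1))^(t:ℕ)) := by
          rw [show M₀ - (t:ℝ) * (lam + L) = M₀ + (-lam * t) + (-((t:ℝ)*L)) by ring,
            Real.exp_add, Real.exp_add]
          ring
      _ = Real.exp M₀ * Real.exp (-lam * t) * Z0 := by rw [expL_pow d t, mul_one]
  -- sum over t
  have hBsum : (∑ t ∈ Finset.Icc 1 n, ∑ s ∈ B t, f s) ≤
      Real.exp M₀ * ((Real.exp (-lam * (nm y)) / (1 - Real.exp (-lam))) * Z0) := by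
    calc (∑ t ∈ Finset.Icc 1 n, ∑ s ∈ B t, f s)
        ≤ ∑ t ∈ Finset.Icc 1 n,
            (if nm y ≤ t then Real.exp M₀ * Real.exp (-lam * t) * Z0 else 0) :=
          Finset.sum_le_sum hB_bound
      _ = ∑ t ∈ (Finset.Icc 1 n).filter (fun t => nm y ≤ t),
            Real.exp M₀ * Real.exp (-lam * t) * Z0 := (Finset.sum_filter _ _).symm
      _ = ∑ t ∈ Finset.Icc (nm y) n, Real.exp M₀ * Real.exp (-lam * t) * Z0 := by
          apply Finset.sum_congr _ (fun _ _ => rfl)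
          ext u
          simp only [Finset.mem_filter, Finset.mem_Icc]
          omega
      _ = Real.exp M₀ * ((∑ t ∈ Finset.Icc (nm y) n, Real.exp (-lam * t)) * Z0) := by
          rw [Finset.sum_mul, Finset.mul_sum]
          apply Finset.sum_congr rfl
          intro t _
          ring
      _ ≤ Real.exp M₀ * ((Real.exp (-lam * (nm y)) / (1 - Real.exp (-lam))) * Z0) := by
          apply mul_le_mul_of_nonneg_left _ hEpos.le
          exact mul_le_mul_of_nonneg_right (geom_tail lam hlam (nm y) n) hZ0
  -- conclusion
  have hmain : (∑ s, f s) ≤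
      (Real.exp M₀ * (1 + (1 - Real.exp (-lam))⁻¹)) *
        (Real.exp (-lam * (nm y)) + c * Real.exp (-lam * n)) * Z0 := by
    rw [hsplit]
    have ha : (0:ℝ) ≤ Real.exp (-lam * (nm y)) := (Real.exp_pos _).le
    have hb : (0:ℝ) ≤ Real.exp (-lam * n) := (Real.exp_pos _).le
    have hc0 : (0:ℝ) ≤ c := by linarith
    rw [div_eq_mul_inv] at hBsum
    nlinarith [hA_bound, hBsum,
      mul_nonneg (mul_nonneg hEpos.le ha) hZ0,
      mul_nonneg (mul_nonneg (mul_nonneg (mul_nonneg hEpos.le hinv0) hc0) hb) hZ0]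
  rw [T_eq V ω φ y, T_eq V ω φ 0]
  calc ((2*(d:ℝ)+1)^(n:ℕ))⁻¹ * ∑ s, f s
      ≤ ((2*(d:ℝ)+1)^(n:ℕ))⁻¹ *
          ((Real.exp M₀ * (1 + (1 - Real.exp (-lam))⁻¹)) *
            (Real.exp (-lam * (nm y)) + c * Real.exp (-lam * n)) * Z0) :=
        mul_le_mul_of_nonneg_left hmain (by positivity)
    _ = (Real.exp M₀ * (1 + (1 - Real.exp (-lam))⁻¹)) *
          (Real.exp (-lam * (nm y)) + c * Real.exp (-lam * n)) *
          (((2*(d:ℝ)+1)^(n:ℕ))⁻¹ * Z0) := by ring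

end BKpaper
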